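/- (Throughput of the myopic policy for two channels, case p11 < p01.) Let 0 ≤ p11 < p01 ≤ 1, let p10 = 1 − p11 and p00 = 1 − p01, and write p11^{(m)} and p10^{(m)} = 1 − p11^{(m)} for the (1,1) and (1,0) entries of the m-th power of the 2×2 transition matrix with rows (p00, p01) and (p10, p11). Consider the Markov chain on the positive integers (transmission-period lengths) with transition probabilities r_{i,1} = p11^{(i+1)} and r_{i,j} = p10^{(i+1)}·p00^{j−2}·p01 for j ≥ 2. Define ω̄' = B/(1 − p11^{(2)} + B), where p11^{(2)} = p10·p01 + p11·p11 and B = [p01/(1 + p01 − p11)]·(1 + (p11 − p01)³·(1 − p11)/(1 − (1 − p01)·(p11 − p01))). Then the sequence λ given by λ_1 = ω̄' and λ_k = (1 − ω̄')·p00^{k−2}·p01 for k ≥ 2 is a probability distribution satisfying the stationarity equations Σ_i λ_i·r_{i,j} = λ_j for every j ≥ 1; moreover Σ_k k·λ_k = 1 + (1 − ω̄')/p01, and consequently the steady-state throughput U = 1/(Σ_k k·λ_k) equals p01/(1 − ω̄' + p01). -/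

import Mathlib

private lemma two_geom_summable {A C x y : ℝ} (hx : |x| < 1) (hy : |y| < 1) :
    Summable (fun m : ℕ => A * x ^ m + C * y ^ m) :=
  ((summable_geometric_of_abs_lt_one hx).mul_left A).add
    ((summable_geometric_of_abs_lt_one hy).mul_left C)

private lemma two_geom_tsum {A C x y : ℝ} (hx : |x| < 1) (hy : |y| < 1) :
    (∑' m : ℕ, (A * x ^ m + C * y ^ m)) = A * (1 - x)⁻¹ + C * (1 - y)⁻¹ := by
  rw [Summable.tsum_add ((summable_geometric_of_abs_lt_one hx).mul_left A)
      ((summable_geometric_of_abs_lt_one hy).mul_left C),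
    tsum_mul_left, tsum_mul_left, tsum_geometric_of_abs_lt_one hx,
    tsum_geometric_of_abs_lt_one hy]

/-- Throughput of the myopic policy for two channels, case `p11 < p01`: the explicit
sequence `λ` is a probability distribution on the positive integers, is stationary for the
transmission-period-length Markov chain with transition probabilities `r`, has mean
`1 + (1−ω̄')/p01`, and yields steady-state throughput
`U = 1/L̄ = p01/(1−ω̄'+p01)`. -/
theorem myopic_throughput_two_channels_neg
    (p01 p11 p10 p00 : ℝ)
    (h0 : 0 ≤ p11) (h11 : p11 < p01) (h1 : p01 ≤ 1)
    (hp10 : p10 = 1 - p11) (hp00 : p00 = 1 - p01)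
    (P : Matrix (Fin 2) (Fin 2) ℝ)
    (hP : P = !![p00, p01; p10, p11])
    (r : ℕ → ℕ → ℝ)
    (hr1 : ∀ i, 1 ≤ i → r i 1 = (P ^ (i + 1)) 1 1)
    (hr2 : ∀ i, 1 ≤ i → ∀ j, 2 ≤ j → r i j = (P ^ (i + 1)) 1 0 * p00 ^ (j - 2) * p01)
    (p11two B ωbar' : ℝ)
    (hp11two : p11two = p10 * p01 + p11 * p11)
    (hB : B = p01 / (1 + p01 - p11) *
      (1 + (p11 - p01) ^ 3 * (1 - p11) / (1 - (1 - p01) * (p11 - p01))))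
    (hωbar' : ωbar' = B / (1 - p11two + B))
    (lam : ℕ → ℝ)
    (hlam1 : lam 1 = ωbar')
    (hlam2 : ∀ k, 2 ≤ k → lam k = (1 - ωbar') * p00 ^ (k - 2) * p01) :
    (∀ k, 1 ≤ k → 0 ≤ lam k) ∧
    (∑' k : ℕ, lam (k + 1)) = 1 ∧
    (∀ j, 1 ≤ j → (∑' i : ℕ, lam (i + 1) * r (i + 1) j) = lam j) ∧
    (∑' k : ℕ, ((k : ℝ) + 1) * lam (k + 1)) = 1 + (1 - ωbar') / p01 ∧
    1 / (∑' k : ℕ, ((k : ℝ) + 1) * lam (k + 1)) = p01 / (1 - ωbar' + p01) := by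
  subst hp10 hp00
  have hp01 : 0 < p01 := h0.trans_lt h11
  have hq0 : (0:ℝ) ≤ 1 - p01 := by linarith
  have hqabs : |1 - p01| < 1 := by rw [abs_of_nonneg hq0]; linarith
  have hD : (0:ℝ) < 1 + p01 - p11 := by linarith
  have hDne : (1 + p01 - p11) ≠ 0 := ne_of_gt hD
  have hdabs : |(1 - p01) * (p11 - p01)| < 1 := by
    rw [abs_lt]; constructor <;> nlinarith
  have hEpos : (0:ℝ) < 1 - (1 - p01) * (p11 - p01) := by nlinarith
  have hEne : (1 - (1 - p01) * (p11 - p01)) ≠ 0 := ne_of_gt hEpos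
  -- matrix entries
  have e01 : P 0 1 = p01 := by rw [hP]; simp
  have e11 : P 1 1 = p11 := by rw [hP]; simp
  have e00 : P 0 0 = 1 - p01 := by rw [hP]; simp
  have e10 : P 1 0 = 1 - p11 := by rw [hP]; simp
  -- closed form for powers
  have hpow : ∀ m : ℕ,
      (P ^ m) 1 1 = (p01 + (1 - p11) * (p11 - p01) ^ m) / (1 + p01 - p11) ∧
      (P ^ m) 1 0 = ((1 - p11) - (1 - p11) * (p11 - p01) ^ m) / (1 + p01 - p11) := by
    intro m
    induction m with
    | zero =>
      rw [pow_zero]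
      constructor
      · rw [Matrix.one_apply_eq]; field_simp; ring
      · rw [Matrix.one_apply_ne (by decide)]; simp
    | succ n ih =>
      obtain ⟨ih1, ih0⟩ := ih
      constructor
      · rw [pow_succ, Matrix.mul_apply, Fin.sum_univ_two, ih1, ih0, e01, e11]
        field_simp; ring
      · rw [pow_succ, Matrix.mul_apply, Fin.sum_univ_two, ih1, ih0, e00, e10]
        field_simp; ring
  have h2entry : (P ^ 2) 1 1 = p11two := by
    rw [(hpow 2).1, hp11two, div_eq_iff hDne]; ring
  -- nonnegativity facts
  have hBnn : 0 ≤ B := by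
    rw [hB]
    have h1' : (-1 : ℝ) ≤ (p11 - p01) ^ 3 * (1 - p11) / (1 - (1 - p01) * (p11 - p01)) := by
      rw [le_div_iff₀ hEpos]; nlinarith [mul_nonneg (mul_nonneg (sub_nonneg.2 h11.le) (sub_nonneg.2 h11.le)) (sub_nonneg.2 h11.le)]
    have h2' : (0:ℝ) ≤ 1 + (p11 - p01) ^ 3 * (1 - p11) / (1 - (1 - p01) * (p11 - p01)) := by
      linarith
    exact mul_nonneg (div_nonneg hp01.le hD.le) h2'
  have h2le : p11two ≤ 1 := by rw [hp11two]; nlinarith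
  have hDen : 0 ≤ 1 - p11two + B := by linarith
  have hw0 : 0 ≤ ωbar' := by rw [hωbar']; exact div_nonneg hBnn hDen
  have hw1 : ωbar' ≤ 1 := by
    rcases eq_or_lt_of_le hDen with h | h
    · have hB0 : B = 0 := by linarith
      rw [hωbar', hB0]; norm_num
    · rw [hωbar']; exact (div_le_one h).2 (by linarith)
  have hfix : ωbar' * p11two + (1 - ωbar') * B = ωbar' := by
    rcases eq_or_lt_of_le hDen with h | h
    · have hB0 : B = 0 := by linarith
      have h2 : p11two = 1 := by linarith
      rw [hωbar', hB0, h2]; norm_num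
    · have hkey : ωbar' * (1 - p11two + B) = B := by
        rw [hωbar']; field_simp
      linear_combination -hkey
  -- lam shift formula
  have hlam_succ : ∀ m : ℕ, lam (m + 2) = ((1 - ωbar') * p01) * (1 - p01) ^ m := by
    intro m
    rw [hlam2 (m + 2) (by omega)]
    simp only [Nat.add_sub_cancel]
    ring
  have sgq : Summable (fun m : ℕ => (1 - p01) ^ m) := summable_geometric_of_abs_lt_one hqabs
  have slam : Summable (fun k : ℕ => lam (k + 1)) := by
    apply (summable_nat_add_iff 1).1
    exact (sgq.mul_left ((1 - ωbar') * p01)).congr (fun m => (hlam_succ m).symm)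
  have e1 : (1:ℝ) - (1 - p01) = p01 := by ring
  have hsum1 : (∑' k : ℕ, lam (k + 1)) = 1 := by
    rw [Summable.tsum_eq_zero_add slam, tsum_congr (fun n : ℕ => hlam_succ n), tsum_mul_left,
      tsum_geometric_of_abs_lt_one hqabs, hlam1, e1]
    field_simp
    ring
  -- S11
  have hS11term : ∀ m : ℕ, lam (m + 1 + 1) * (P ^ (m + 1 + 1 + 1)) 1 1
      = ((1 - ωbar') * p01 * p01 / (1 + p01 - p11)) * (1 - p01) ^ m
        + ((1 - ωbar') * p01 * (1 - p11) * (p11 - p01) ^ 3 / (1 + p01 - p11)) *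
          ((1 - p01) * (p11 - p01)) ^ m := by
    intro m
    have : lam (m + 1 + 1) = ((1 - ωbar') * p01) * (1 - p01) ^ m := hlam_succ m
    rw [this, (hpow (m + 1 + 1 + 1)).1, mul_pow]
    field_simp
    ring
  have sS11 : Summable (fun i : ℕ => lam (i + 1) * (P ^ (i + 1 + 1)) 1 1) := by
    apply (summable_nat_add_iff 1).1
    exact (two_geom_summable hqabs hdabs).congr (fun m => (hS11term m).symm)
  have hS11 : (∑' i : ℕ, lam (i + 1) * (P ^ (i + 1 + 1)) 1 1) = ωbar' := by
    rw [Summable.tsum_eq_zero_add sS11, tsum_congr hS11term, two_geom_tsum hqabs hdabs]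
    simp only [show (0:ℕ) + 1 + 1 = 2 from rfl, show (0:ℕ) + 1 = 1 from rfl]
    rw [h2entry, hlam1, e1]
    have hBval : ((1 - ωbar') * p01 * p01 / (1 + p01 - p11)) * p01⁻¹
        + ((1 - ωbar') * p01 * (1 - p11) * (p11 - p01) ^ 3 / (1 + p01 - p11)) *
          (1 - (1 - p01) * (p11 - p01))⁻¹ = (1 - ωbar') * B := by
      rw [hB]
      field_simp
    rw [hBval]
    exact hfix
  -- S10
  have h10of11 : ∀ m : ℕ, (P ^ m) 1 0 = 1 - (P ^ m) 1 1 := by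
    intro m
    rw [(hpow m).1, (hpow m).2]
    field_simp
    ring
  have sS10 : Summable (fun i : ℕ => lam (i + 1) * (P ^ (i + 1 + 1)) 1 0) := by
    refine (slam.sub sS11).congr (fun i => ?_)
    rw [h10of11]; ring
  have hS10 : (∑' i : ℕ, lam (i + 1) * (P ^ (i + 1 + 1)) 1 0) = 1 - ωbar' := by
    have hc : ∀ i : ℕ, lam (i + 1) * (P ^ (i + 1 + 1)) 1 0
        = lam (i + 1) - lam (i + 1) * (P ^ (i + 1 + 1)) 1 1 := by
      intro i; rw [h10of11]; ring
    rw [tsum_congr hc, Summable.tsum_sub slam sS11, hsum1, hS11]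
  -- mean
  have snq : Summable (fun m : ℕ => (m : ℝ) * (1 - p01) ^ m) := by
    have := summable_pow_mul_geometric_of_norm_lt_one (R := ℝ) (r := 1 - p01) 1
      (by rwa [Real.norm_eq_abs])
    simpa using this
  have hterm : ∀ m : ℕ, (((m + 1 : ℕ) : ℝ) + 1) * lam (m + 1 + 1)
      = ((1 - ωbar') * p01) * ((m : ℝ) * (1 - p01) ^ m)
        + (2 * (1 - ωbar') * p01) * (1 - p01) ^ m := by
    intro m
    have : lam (m + 1 + 1) = ((1 - ωbar') * p01) * (1 - p01) ^ m := hlam_succ m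
    rw [this]; push_cast; ring
  have smean : Summable (fun k : ℕ => ((k : ℝ) + 1) * lam (k + 1)) := by
    apply (summable_nat_add_iff 1).1
    exact ((snq.mul_left ((1 - ωbar') * p01)).add
      (sgq.mul_left (2 * (1 - ωbar') * p01))).congr (fun m => (hterm m).symm)
  have hmean : (∑' k : ℕ, ((k : ℝ) + 1) * lam (k + 1)) = 1 + (1 - ωbar') / p01 := by
    rw [Summable.tsum_eq_zero_add smean, tsum_congr hterm,
      Summable.tsum_add (snq.mul_left _) (sgq.mul_left _), tsum_mul_left, tsum_mul_left,
      tsum_coe_mul_geometric_of_norm_lt_one (by rwa [Real.norm_eq_abs]),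
      tsum_geometric_of_abs_lt_one hqabs, e1]
    simp only [Nat.cast_zero, zero_add, hlam1]
    field_simp
    ring
  refine ⟨?_, hsum1, ?_, hmean, ?_⟩
  · intro k hk
    rcases eq_or_lt_of_le hk with h | h
    · rw [← h, hlam1]; exact hw0
    · rw [hlam2 k (by omega)]
      exact mul_nonneg (mul_nonneg (by linarith) (pow_nonneg hq0 _)) hp01.le
  · intro j hj
    rcases eq_or_lt_of_le hj with h | h
    · rw [← h]
      rw [tsum_congr (fun i : ℕ => by rw [hr1 (i + 1) (by omega)] :
        ∀ i : ℕ, lam (i + 1) * r (i + 1) 1 = lam (i + 1) * (P ^ (i + 1 + 1)) 1 1)]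
      rw [hS11, hlam1]
    · have hj2 : 2 ≤ j := h
      have hc : ∀ i : ℕ, lam (i + 1) * r (i + 1) j
          = (lam (i + 1) * (P ^ (i + 1 + 1)) 1 0) * ((1 - p01) ^ (j - 2) * p01) := by
        intro i
        rw [hr2 (i + 1) (by omega) j hj2]; ring
      rw [tsum_congr hc, tsum_mul_right, hS10, hlam2 j hj2]
      ring
  · rw [hmean]
    have hpos : (0:ℝ) < 1 - ωbar' + p01 := by linarith
    rw [show (1:ℝ) + (1 - ωbar') / p01 = (1 - ωbar' + p01) / p01 by field_simp; ring,
      one_div_div]
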